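/- arXiv:1704.02060 — 2 statements merged into one kernel-verified Lean document; each statement's English description precedes it below -/
import Mathlib

section
/- For two subspaces U and W of R^n, the eigenvalues of P_U + P_W that exceed 1 are exactly 1 + cos φ_i where φ_i ranges over the principal angles between U and W with cos φ_i > 0 (counted with multiplicity). -/
open Matrix

/-- View a plain vector as an element of Euclidean space. -/
noncomputable def toEuc {n : ℕ} (v : Fin n → ℝ) : EuclideanSpace ℝ (Fin n) := WithLp.toLp 2 v

/-- The row space of a matrix, as a subspace of Euclidean space `ℝ^n`. -/
noncomputable def rowSpace {m : Type*} {n : ℕ} (A : Matrix m (Fin n) ℝ) :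
    Submodule ℝ (EuclideanSpace ℝ (Fin n)) :=
  Submodule.span ℝ (Set.range fun i => toEuc (A i))

/-- The orthogonal projection matrix onto a subspace of `ℝ^n`. -/
noncomputable def projMat {n : ℕ} (U : Submodule ℝ (EuclideanSpace ℝ (Fin n))) :
    Matrix (Fin n) (Fin n) ℝ :=
  Matrix.toEuclideanLin.symm (U.subtype ∘ₗ (U.orthogonalProjectionOnto).toLinearMap)

/-- The operator (spectral) norm of a matrix. -/
noncomputable def opNorm {m : Type*} [Fintype m] {n : ℕ} (A : Matrix m (Fin n) ℝ) : ℝ :=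
  ‖(Matrix.toEuclideanLin A).toContinuousLinearMap‖

/-- Singular values of a matrix, in ascending order. -/
noncomputable def svalAsc {m : Type*} [Fintype m] {n : ℕ} (A : Matrix m (Fin n) ℝ) :
    Fin n → ℝ := fun i =>
  Real.sqrt ((Matrix.isHermitian_conjTranspose_mul_self A).eigenvalues
    (Tuple.sort (Matrix.isHermitian_conjTranspose_mul_self A).eigenvalues i))

/-- Singular values of a matrix, in descending order (`svalDesc A 0` is the largest). -/
noncomputable def svalDesc {m : Type*} [Fintype m] {n : ℕ} (A : Matrix m (Fin n) ℝ)
    (i : Fin n) : ℝ :=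
  svalAsc A i.rev

section charpolyAux

open Polynomial

variable {m k : Type*} [Fintype m] [DecidableEq m] [Fintype k] [DecidableEq k]

lemma evalCharpoly (M : Matrix m m ℝ) (r : ℝ) :
    M.charpoly.eval r = (r • (1 : Matrix m m ℝ) - M).det := by
  rw [Matrix.charpoly]
  rw [show (Polynomial.eval r : ℝ[X] → ℝ) = ⇑(Polynomial.evalRingHom r) from rfl]
  rw [RingHom.map_det]
  congr 1
  ext i j
  simp only [RingHom.mapMatrix_apply, Matrix.map_apply]
  by_cases h : i = j
  · subst h
    simp [charmatrix_apply_eq, Matrix.sub_apply, Matrix.one_apply]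
  · simp [charmatrix_apply_ne _ _ _ h, Matrix.sub_apply, Matrix.one_apply_ne h]

lemma charpolyConj (V V' M : Matrix m m ℝ) (h1 : V * V' = 1) :
    (V * M * V').charpoly = M.charpoly := by
  apply Polynomial.funext
  intro r
  rw [evalCharpoly, evalCharpoly]
  have e : r • (1 : Matrix m m ℝ) - V * M * V' = V * (r • 1 - M) * V' := by
    rw [Matrix.mul_sub, Matrix.sub_mul, Matrix.mul_smul, Matrix.mul_one, Matrix.smul_mul, h1]
  have hd : det V * det V' = 1 := by rw [← det_mul, h1, det_one]
  rw [e, det_mul, det_mul, mul_right_comm, hd, one_mul]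

lemma charpolyDiagonal (d : m → ℝ) :
    (diagonal d).charpoly = ∏ i, (X - C (d i)) := by
  rw [Matrix.charpoly]
  have e : charmatrix (diagonal d) = diagonal fun i => X - C (d i) := by
    ext i j
    by_cases h : i = j
    · subst h; simp [charmatrix_apply_eq]
    · simp [charmatrix_apply_ne _ _ _ h, diagonal_apply_ne _ h]
  rw [e, det_diagonal]

lemma charpolyHerm (A : Matrix m m ℝ) (hA : A.IsHermitian) :
    A.charpoly = ∏ i, (X - C (hA.eigenvalues i)) := by
  have h1 : (hA.eigenvectorUnitary : Matrix m m ℝ) * (star hA.eigenvectorUnitary : Matrix m m ℝ)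
      = 1 := Matrix.mem_unitaryGroup_iff.mp hA.eigenvectorUnitary.2
  have hco : (RCLike.ofReal ∘ hA.eigenvalues : m → ℝ) = hA.eigenvalues := by
    funext i; simp [RCLike.ofReal]
  rw [congrArg Matrix.charpoly hA.spectral_theorem, Unitary.conjStarAlgAut_apply, charpolyConj _ _ _ h1, hco,
    charpolyDiagonal]

lemma charpolyHermSq (A : Matrix m m ℝ) (hA : A.IsHermitian) :
    (A * A).charpoly = ∏ i, (X - C (hA.eigenvalues i * hA.eigenvalues i)) := by
  set V := (hA.eigenvectorUnitary : Matrix m m ℝ) with hV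
  set D := diagonal (RCLike.ofReal ∘ hA.eigenvalues : m → ℝ) with hD
  have h1 : V * star V = 1 := Matrix.mem_unitaryGroup_iff.mp hA.eigenvectorUnitary.2
  have h2 : star V * V = 1 := Matrix.mem_unitaryGroup_iff'.mp hA.eigenvectorUnitary.2
  have hsq : A * A = V * (D * D) * star V := by
    rw [congrArg (fun M => M * M) hA.spectral_theorem, Unitary.conjStarAlgAut_apply]
    simp only [Matrix.mul_assoc]
    rw [show star V * (V * (D * star V)) = D * star V by
      rw [← Matrix.mul_assoc, h2, Matrix.one_mul]]
  have hco : (RCLike.ofReal ∘ hA.eigenvalues : m → ℝ) = hA.eigenvalues := by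
    funext i; simp [RCLike.ofReal]
  rw [hsq, charpolyConj _ _ _ h1, hD, hco, diagonal_mul_diagonal, charpolyDiagonal]

lemma rootsCharpolyHerm (A : Matrix m m ℝ) (hA : A.IsHermitian) :
    A.charpoly.roots = Finset.univ.val.map hA.eigenvalues := by
  rw [charpolyHerm A hA, Finset.prod_eq_multiset_prod,
    show (fun i => X - C (hA.eigenvalues i)) = (fun a => X - C a) ∘ hA.eigenvalues from rfl,
    ← Multiset.map_map, Polynomial.roots_multiset_prod_X_sub_C]

lemma charpolyMulCommPow (A : Matrix m k ℝ) (B : Matrix k m ℝ) :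
    (X : ℝ[X]) ^ (Fintype.card k) * (A * B).charpoly
      = X ^ (Fintype.card m) * (B * A).charpoly := by
  have key : ∀ r : ℝ, r ≠ 0 →
      r ^ (Fintype.card k) * ((A * B).charpoly.eval r)
        = r ^ (Fintype.card m) * ((B * A).charpoly.eval r) := by
    intro r hr
    rw [evalCharpoly, evalCharpoly]
    have e1 : r • (1 : Matrix m m ℝ) - A * B = r • (1 - (r⁻¹ • A) * B) := by
      rw [smul_sub, Matrix.smul_mul, smul_smul, mul_inv_cancel₀ hr, one_smul]
    have e2 : r • (1 : Matrix k k ℝ) - B * A = r • (1 - B * (r⁻¹ • A)) := by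
      rw [smul_sub, Matrix.mul_smul, smul_smul, mul_inv_cancel₀ hr, one_smul]
    rw [e1, e2, det_smul, det_smul, det_one_sub_mul_comm]
    ring
  have h0 : (X : ℝ[X]) ^ Fintype.card k * (A * B).charpoly
      - X ^ Fintype.card m * (B * A).charpoly = 0 := by
    apply Polynomial.eq_zero_of_infinite_isRoot
    apply Set.Infinite.mono (s := {(0:ℝ)}ᶜ)
    · intro x hx
      have hx0 : x ≠ 0 := by simpa using hx
      simp only [Set.mem_setOf_eq, Polynomial.IsRoot, Polynomial.eval_sub, Polynomial.eval_mul,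
        Polynomial.eval_pow, Polynomial.eval_X]
      rw [key x hx0]; ring
    · exact Set.Finite.infinite_compl (Set.finite_singleton 0)
  exact sub_eq_zero.mp h0

end charpolyAux

lemma projMat_eq {n p : ℕ} (B : Matrix (Fin n) (Fin p) ℝ) (hB : Bᵀ * B = 1) :
    projMat (rowSpace Bᵀ) = B * Bᵀ := by
  rw [projMat, LinearEquiv.symm_apply_eq]
  apply LinearMap.ext
  intro v
  simp only [LinearMap.coe_comp, Function.comp_apply, Submodule.coe_subtype]
  show ((rowSpace Bᵀ).orthogonalProjectionOnto v : EuclideanSpace ℝ (Fin n))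
      = Matrix.toEuclideanLin (B * Bᵀ) v
  rw [← Submodule.starProjection_apply]
  set u : EuclideanSpace ℝ (Fin n) := Matrix.toEuclideanLin (B * Bᵀ) v with hu
  have huv : ∀ i, u i = ((B * Bᵀ) *ᵥ (v : Fin n → ℝ)) i := fun i => rfl
  apply Submodule.eq_starProjection_of_mem_of_inner_eq_zero
  · have : u = ∑ j, (Bᵀ *ᵥ (v : Fin n → ℝ)) j • toEuc (Bᵀ j) := by
      apply PiLp.ext
      intro i
      rw [huv,
        show (∑ j, (Bᵀ *ᵥ (v : Fin n → ℝ)) j • toEuc (Bᵀ j)) i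
          = ∑ j, ((Bᵀ *ᵥ (v : Fin n → ℝ)) j • toEuc (Bᵀ j)) i from by rw [WithLp.ofLp_sum, Finset.sum_apply]]
      simp only [PiLp.smul_apply, smul_eq_mul, toEuc, PiLp.toLp_apply,
        Matrix.mulVec, dotProduct, Matrix.mul_apply, Matrix.transpose_apply,
        Finset.sum_mul]
      rw [Finset.sum_comm]
      exact Finset.sum_congr rfl fun a _ => Finset.sum_congr rfl fun b _ => by ring
    rw [this]
    exact Submodule.sum_mem _ fun j _ =>
      Submodule.smul_mem _ _ (Submodule.subset_span ⟨j, rfl⟩)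
  · intro w hw
    have hsub : ∀ i, (v - u : EuclideanSpace ℝ (Fin n)) i
        = (v : Fin n → ℝ) i - ((B * Bᵀ) *ᵥ (v : Fin n → ℝ)) i := by
      intro i; rw [← huv]; rfl
    have h2 : Bᵀ *ᵥ ((B * Bᵀ) *ᵥ (v : Fin n → ℝ)) = Bᵀ *ᵥ (v : Fin n → ℝ) := by
      rw [Matrix.mulVec_mulVec, ← Matrix.mul_assoc, hB, Matrix.one_mul]
    have key : ∀ j, (inner ℝ (v - u) (toEuc (Bᵀ j)) : ℝ) = 0 := by
      intro j
      rw [PiLp.inner_apply]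
      simp only [RCLike.inner_apply, conj_trivial]
      simp only [mul_comm (WithLp.ofLp (toEuc (Bᵀ j)) _)]
      calc (∑ i, (v - u : EuclideanSpace ℝ (Fin n)) i * toEuc (Bᵀ j) i)
          = (Bᵀ *ᵥ (v : Fin n → ℝ)) j - (Bᵀ *ᵥ ((B * Bᵀ) *ᵥ (v : Fin n → ℝ))) j := by
            simp only [hsub, toEuc, PiLp.toLp_apply, Matrix.mulVec, dotProduct, Matrix.transpose_apply,
              sub_mul, Finset.sum_sub_distrib]
            congr 1 <;> exact Finset.sum_congr rfl fun i _ => mul_comm _ _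
        _ = 0 := by rw [h2, sub_self]
    refine Submodule.span_induction (p := fun w _ => (inner ℝ (v - u) w : ℝ) = 0) ?_ ?_ ?_ ?_ hw
    · rintro w ⟨j, rfl⟩; exact key j
    · simp
    · intro a b _ _ ha hb; rw [inner_add_right, ha, hb, add_zero]
    · intro r a _ ha; rw [real_inner_smul_right, ha, mul_zero]

lemma multiset_add_self_cancel {A B : Multiset ℝ} (h : A + A = B + B) : A = B := by
  ext a
  have := congrArg (Multiset.count a) h
  simp only [Multiset.count_add] at this
  omega

/-- for subspaces `U`, `W` of `ℝ^n` with orthonormal basis matrices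
`BU`, `BW`, the eigenvalues of `P_U + P_W` exceeding `1` are exactly the numbers
`1 + cos φᵢ` with `cos φᵢ > 0`, where `cos φᵢ` ranges over the singular values of
`BUᵀ * BW` — as multisets, i.e. counted with multiplicity. -/
theorem eigenvalues_proj_add_proj_gt_one (n p q : ℕ)
    (U W : Submodule ℝ (EuclideanSpace ℝ (Fin n)))
    (BU : Matrix (Fin n) (Fin p) ℝ) (BW : Matrix (Fin n) (Fin q) ℝ)
    (hBU1 : BUᵀ * BU = 1) (hBU2 : rowSpace BUᵀ = U)
    (hBW1 : BWᵀ * BW = 1) (hBW2 : rowSpace BWᵀ = W)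
    (hP : (projMat U + projMat W).IsHermitian) :
    Multiset.filter (fun x => 1 < x)
        ((Finset.univ.val : Multiset (Fin n)).map hP.eigenvalues)
      = Multiset.filter (fun x => 1 < x)
        ((Finset.univ.val : Multiset (Fin q)).map fun i => 1 + svalDesc (BUᵀ * BW) i) := by
  open Polynomial in
  subst hBU2; subst hBW2
  set Cm : Matrix (Fin p) (Fin q) ℝ := BUᵀ * BW with hCm
  have hF : (Cmᴴ * Cm).IsHermitian := Matrix.isHermitian_conjTranspose_mul_self Cm
  set N : Matrix (Fin n) (Fin p ⊕ Fin q) ℝ := fromCols BU BW with hNdef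
  set K : Matrix (Fin p ⊕ Fin q) (Fin p ⊕ Fin q) ℝ := fromBlocks 0 Cm Cmᵀ 0 with hKdef
  have hK : K.IsHermitian := by
    rw [Matrix.IsHermitian, conjTranspose_eq_transpose_of_trivial, hKdef, fromBlocks_transpose]
    simp
  set E : Multiset ℝ := Finset.univ.val.map hK.eigenvalues with hEdef
  set F : Multiset ℝ := Finset.univ.val.map hF.eigenvalues with hFdef2
  -- the sum of projections
  have hS : projMat (rowSpace BUᵀ) + projMat (rowSpace BWᵀ) = N * Nᵀ := by
    rw [hNdef, transpose_fromCols, fromCols_mul_fromRows,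
      projMat_eq BU hBU1, projMat_eq BW hBW1]
  have hCmT : BWᵀ * BU = Cmᵀ := by rw [hCm, transpose_mul, transpose_transpose]
  have hNtN : Nᵀ * N = 1 + K := by
    rw [hNdef, transpose_fromCols, fromRows_mul_fromCols, hBU1, hBW1, hCmT, hKdef]
    ext i j
    rcases i with i | i <;> rcases j with j | j <;>
      simp [hCm, Matrix.add_apply, Matrix.one_apply, Matrix.fromBlocks_apply₁₁,
        Matrix.fromBlocks_apply₁₂, Matrix.fromBlocks_apply₂₁, Matrix.fromBlocks_apply₂₂]
  -- left side : roots of charpoly of N * Nᵀ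
  have hrootsNNt : (N * Nᵀ).charpoly.roots = Finset.univ.val.map hP.eigenvalues := by
    rw [← congrArg (fun M => Matrix.charpoly M) hS]
    exact rootsCharpolyHerm _ hP
  have hmonNNt := (Matrix.charpoly_monic (N * Nᵀ)).ne_zero
  have hmonNtN := (Matrix.charpoly_monic (Nᵀ * N)).ne_zero
  have hrootsEq : Multiset.filter (fun x : ℝ => 1 < x) (N * Nᵀ).charpoly.roots
      = Multiset.filter (fun x : ℝ => 1 < x) (Nᵀ * N).charpoly.roots := by
    have h1 := congrArg Polynomial.roots (charpolyMulCommPow N Nᵀ)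
    rw [Polynomial.roots_mul (mul_ne_zero (pow_ne_zero _ Polynomial.X_ne_zero) hmonNNt),
      Polynomial.roots_mul (mul_ne_zero (pow_ne_zero _ Polynomial.X_ne_zero) hmonNtN),
      Polynomial.roots_pow, Polynomial.roots_pow, Polynomial.roots_X] at h1
    have h2 := congrArg (Multiset.filter (fun x : ℝ => 1 < x)) h1
    rw [Multiset.filter_add, Multiset.filter_add, Multiset.filter_nsmul, Multiset.filter_nsmul,
      show Multiset.filter (fun x : ℝ => 1 < x) {0} = 0 from by
        rw [Multiset.filter_singleton, if_neg (by norm_num)]; rfl] at h2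
    simpa using h2
  have hroots1K : (Nᵀ * N).charpoly.roots = E.map (fun x => 1 + x) := by
    have hcp : (Nᵀ * N).charpoly = ∏ i, (X - Polynomial.C (1 + hK.eigenvalues i)) := by
      rw [congrArg Matrix.charpoly hNtN]
      apply Polynomial.funext
      intro r
      have e : r • (1 : Matrix (Fin p ⊕ Fin q) (Fin p ⊕ Fin q) ℝ) - (1 + K)
          = (r - 1) • 1 - K := by rw [sub_smul, one_smul, sub_add_eq_sub_sub]
      rw [evalCharpoly, e, ← evalCharpoly, charpolyHerm K hK]
      simp only [Polynomial.eval_prod, Polynomial.eval_sub, Polynomial.eval_X, Polynomial.eval_C]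
      exact Finset.prod_congr rfl fun i _ => by ring
    rw [hcp, Finset.prod_eq_multiset_prod,
      show (fun i => X - Polynomial.C (1 + hK.eigenvalues i))
        = (fun a => X - Polynomial.C a) ∘ (fun i => 1 + hK.eigenvalues i) from rfl,
      ← Multiset.map_map, Polynomial.roots_multiset_prod_X_sub_C, hEdef, Multiset.map_map]
    rfl
  -- spectrum of K is symmetric
  set J : Matrix (Fin p ⊕ Fin q) (Fin p ⊕ Fin q) ℝ := fromBlocks 1 0 0 (-1) with hJdef
  have hJJ : J * J = 1 := by
    rw [hJdef, fromBlocks_multiply]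
    simp [fromBlocks_one]
  have hJKJ : J * K * J = -K := by
    rw [hJdef, hKdef, fromBlocks_multiply, fromBlocks_multiply]
    ext i j
    rcases i with i | i <;> rcases j with j | j <;>
      simp [Matrix.neg_apply, Matrix.fromBlocks_apply₁₁, Matrix.fromBlocks_apply₁₂,
        Matrix.fromBlocks_apply₂₁, Matrix.fromBlocks_apply₂₂]
  have hsymE : E.map (fun x => -x) = E := by
    have hcpneg : (-K).charpoly = K.charpoly := by
      rw [← hJKJ, charpolyConj _ _ _ hJJ]
    have hprodneg : (-K).charpoly = ∏ i, (X - Polynomial.C (-(hK.eigenvalues i))) := by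
      apply Polynomial.funext
      intro r
      have e : r • (1 : Matrix (Fin p ⊕ Fin q) (Fin p ⊕ Fin q) ℝ) - -K
          = -((-r) • 1 - K) := by module
      rw [evalCharpoly, e, Matrix.det_neg, ← evalCharpoly, charpolyHerm K hK]
      simp only [Polynomial.eval_prod, Polynomial.eval_sub, Polynomial.eval_X, Polynomial.eval_C]
      rw [← Finset.card_univ, ← Finset.prod_const, ← Finset.prod_mul_distrib]
      exact Finset.prod_congr rfl fun i _ => by ring
    have h1 : (-K).charpoly.roots = E.map (fun x => -x) := by
      rw [hprodneg, Finset.prod_eq_multiset_prod,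
        show (fun i => X - Polynomial.C (-(hK.eigenvalues i)))
          = (fun a => X - Polynomial.C a) ∘ (fun i => -(hK.eigenvalues i)) from rfl,
        ← Multiset.map_map, Polynomial.roots_multiset_prod_X_sub_C, hEdef, Multiset.map_map]
      rfl
    rw [← h1, hcpneg, rootsCharpolyHerm K hK, hEdef]
  -- squares
  have hKK : K * K = fromBlocks (Cm * Cmᵀ) 0 0 (Cmᵀ * Cm) := by
    rw [hKdef, fromBlocks_multiply]
    simp
  have hrootsKK : (K * K).charpoly.roots = E.map (fun x => x * x) := by
    rw [charpolyHermSq K hK, Finset.prod_eq_multiset_prod,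
      show (fun i => X - Polynomial.C (hK.eigenvalues i * hK.eigenvalues i))
        = (fun a => X - Polynomial.C a) ∘ (fun i => hK.eigenvalues i * hK.eigenvalues i) from rfl,
      ← Multiset.map_map, Polynomial.roots_multiset_prod_X_sub_C, hEdef, Multiset.map_map]
    rfl
  have hrootsBlocks : (K * K).charpoly.roots
      = (Cm * Cmᵀ).charpoly.roots + (Cmᵀ * Cm).charpoly.roots := by
    rw [congrArg Matrix.charpoly hKK, Matrix.charpoly_fromBlocks_zero₁₂,
      Polynomial.roots_mul (mul_ne_zero (Matrix.charpoly_monic _).ne_zero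
        (Matrix.charpoly_monic _).ne_zero)]
  have hrootsCtC : (Cmᵀ * Cm).charpoly.roots = F := by
    have hct : Cmᴴ = Cmᵀ := conjTranspose_eq_transpose_of_trivial Cm
    rw [← hct]
    exact rootsCharpolyHerm _ hF
  have hposCC : Multiset.filter (fun x : ℝ => x ≠ 0) (Cm * Cmᵀ).charpoly.roots
      = Multiset.filter (fun x : ℝ => x ≠ 0) F := by
    have h1 := congrArg Polynomial.roots (charpolyMulCommPow Cm Cmᵀ)
    rw [Polynomial.roots_mul (mul_ne_zero (pow_ne_zero _ Polynomial.X_ne_zero)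
        (Matrix.charpoly_monic _).ne_zero),
      Polynomial.roots_mul (mul_ne_zero (pow_ne_zero _ Polynomial.X_ne_zero)
        (Matrix.charpoly_monic _).ne_zero),
      Polynomial.roots_pow, Polynomial.roots_pow, Polynomial.roots_X] at h1
    have h2 := congrArg (Multiset.filter (fun x : ℝ => x ≠ 0)) h1
    rw [Multiset.filter_add, Multiset.filter_add, Multiset.filter_nsmul, Multiset.filter_nsmul,
      show Multiset.filter (fun x : ℝ => x ≠ 0) {0} = 0 from by
        rw [Multiset.filter_singleton, if_neg (by norm_num)]; rfl] at h2
    simpa [hrootsCtC] using h2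
  have hFnonneg : ∀ x ∈ F, 0 ≤ x := by
    rw [hFdef2]
    intro x hx
    obtain ⟨i, _, rfl⟩ := Multiset.mem_map.mp hx
    exact (Matrix.posSemidef_conjTranspose_mul_self Cm).eigenvalues_nonneg i
  -- splitting E by sign
  have hEneg : Multiset.filter (fun x : ℝ => x < 0) E
      = (Multiset.filter (fun x : ℝ => 0 < x) E).map (fun x => -x) := by
    conv_lhs => rw [← hsymE]
    rw [Multiset.filter_map]
    congr 1
    exact Multiset.filter_congr fun x _ => by simp
  have hEsplit : Multiset.filter (fun x : ℝ => x ≠ 0) E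
      = Multiset.filter (fun x : ℝ => 0 < x) E + Multiset.filter (fun x : ℝ => x < 0) E := by
    have h := Multiset.filter_add_filter (fun x : ℝ => 0 < x) (fun x : ℝ => x < 0) E
    rw [show Multiset.filter (fun a : ℝ => 0 < a ∨ a < 0) E
          = Multiset.filter (fun x : ℝ => x ≠ 0) E from
        Multiset.filter_congr fun x _ => by rw [or_comm, lt_or_lt_iff_ne],
      show Multiset.filter (fun a : ℝ => 0 < a ∧ a < 0) E = 0 from
        Multiset.filter_eq_nil.mpr fun a _ h' => lt_asymm h'.1 h'.2,
      add_zero] at h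
    exact h.symm
  have hmapsq2 : Multiset.filter (fun x : ℝ => x ≠ 0) (E.map (fun x => x * x))
      = (Multiset.filter (fun x : ℝ => x ≠ 0) E).map (fun x => x * x) := by
    rw [Multiset.filter_map]
    congr 1
    exact Multiset.filter_congr fun x _ => by simp [mul_self_ne_zero]
  have hhalf : (Multiset.filter (fun x : ℝ => 0 < x) E).map (fun x => x * x)
      = Multiset.filter (fun x : ℝ => x ≠ 0) F := by
    apply multiset_add_self_cancel
    calc (Multiset.filter (fun x : ℝ => 0 < x) E).map (fun x => x * x)
          + (Multiset.filter (fun x : ℝ => 0 < x) E).map (fun x => x * x)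
        = (Multiset.filter (fun x : ℝ => x ≠ 0) E).map (fun x => x * x) := by
          rw [hEsplit, hEneg, Multiset.map_add, Multiset.map_map]
          congr 1
          exact (Multiset.map_congr rfl fun x _ => by simp).symm
      _ = Multiset.filter (fun x : ℝ => x ≠ 0) (E.map (fun x => x * x)) := hmapsq2.symm
      _ = Multiset.filter (fun x : ℝ => x ≠ 0) F + Multiset.filter (fun x : ℝ => x ≠ 0) F := by
          rw [← hrootsKK, hrootsBlocks, Multiset.filter_add, hposCC, hrootsCtC]
  have hFpos_eq : Multiset.filter (fun x : ℝ => x ≠ 0) F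
      = Multiset.filter (fun x : ℝ => 0 < x) F :=
    Multiset.filter_congr fun x hx => by
      have h0 := hFnonneg x hx
      constructor
      · intro h'; exact lt_of_le_of_ne h0 (Ne.symm h')
      · intro h'; exact ne_of_gt h'
  have hGmain : Multiset.filter (fun x : ℝ => 0 < x) E
      = (Multiset.filter (fun x : ℝ => 0 < x) F).map Real.sqrt := by
    have h1 : ((Multiset.filter (fun x : ℝ => 0 < x) E).map (fun x => x * x)).map Real.sqrt
        = Multiset.filter (fun x : ℝ => 0 < x) E := by
      rw [Multiset.map_map]
      rw [show Multiset.map (Real.sqrt ∘ fun x => x * x) (Multiset.filter (fun x : ℝ => 0 < x) E)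
          = Multiset.map id (Multiset.filter (fun x : ℝ => 0 < x) E) from
        Multiset.map_congr rfl fun x hx =>
          Real.sqrt_mul_self (le_of_lt (Multiset.of_mem_filter hx))]
      exact Multiset.map_id _
    rw [← h1, hhalf, hFpos_eq]
  -- right-hand side
  have hRHS : (Finset.univ.val : Multiset (Fin q)).map (fun i => 1 + svalDesc Cm i)
      = (F.map Real.sqrt).map (fun x => 1 + x) := by
    set σ : Equiv.Perm (Fin q) := Fin.revPerm.trans (Tuple.sort hF.eigenvalues) with hσ
    have hperm : Multiset.map (⇑σ) Finset.univ.val = Finset.univ.val := by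
      have h := congrArg Finset.val (Finset.map_univ_equiv σ)
      rwa [Finset.map_val, Equiv.coe_toEmbedding] at h
    calc (Finset.univ.val : Multiset (Fin q)).map (fun i => 1 + svalDesc Cm i)
        = Multiset.map ((fun j => 1 + Real.sqrt (hF.eigenvalues j)) ∘ ⇑σ) Finset.univ.val := rfl
      _ = Multiset.map (fun j => 1 + Real.sqrt (hF.eigenvalues j))
            (Multiset.map (⇑σ) Finset.univ.val) := (Multiset.map_map _ _ _).symm
      _ = Multiset.map (fun j => 1 + Real.sqrt (hF.eigenvalues j)) Finset.univ.val := by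
            rw [hperm]
      _ = (F.map Real.sqrt).map (fun x => 1 + x) := by
            rw [hFdef2, Multiset.map_map, Multiset.map_map]
            rfl
  calc Multiset.filter (fun x => 1 < x) ((Finset.univ.val : Multiset (Fin n)).map hP.eigenvalues)
      = Multiset.filter (fun x : ℝ => 1 < x) ((N * Nᵀ).charpoly.roots) := by rw [hrootsNNt]
    _ = Multiset.filter (fun x : ℝ => 1 < x) ((Nᵀ * N).charpoly.roots) := hrootsEq
    _ = Multiset.filter (fun x : ℝ => 1 < x) (E.map (fun x => 1 + x)) := by rw [hroots1K]
    _ = (Multiset.filter (fun x : ℝ => 0 < x) E).map (fun x => 1 + x) := by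
        rw [Multiset.filter_map]
        congr 1
        exact Multiset.filter_congr fun x _ => by
          simp only [Function.comp]
          constructor <;> intro h <;> linarith
    _ = ((Multiset.filter (fun x : ℝ => 0 < x) F).map Real.sqrt).map (fun x => 1 + x) := by
        rw [hGmain]
    _ = (Multiset.filter (fun x : ℝ => 0 < x) (F.map Real.sqrt)).map (fun x => 1 + x) := by
        have hfm : Multiset.filter (fun x : ℝ => 0 < x) (F.map Real.sqrt)
            = (Multiset.filter (fun x : ℝ => 0 < x) F).map Real.sqrt := by
          rw [Multiset.filter_map (p := fun x : ℝ => 0 < x) (f := Real.sqrt) (s := F)]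
          congr 1
          exact Multiset.filter_congr fun x _ => Real.sqrt_pos
        rw [hfm]
    _ = Multiset.filter (fun x => 1 < x) ((F.map Real.sqrt).map (fun x => 1 + x)) := by
        rw [Multiset.filter_map (p := fun x : ℝ => 1 < x) (f := fun x : ℝ => 1 + x)
          (s := F.map Real.sqrt)]
        congr 1
        exact Multiset.filter_congr fun x _ => by
          show 0 < x ↔ 1 < 1 + x
          constructor <;> intro h <;> linarith
    _ = Multiset.filter (fun x => 1 < x)
          ((Finset.univ.val : Multiset (Fin q)).map fun i => 1 + svalDesc Cm i) := by
        rw [hRHS]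
end

section
/- (Angle bound for perturbed common subspace, two blocks) Let J be a subspace of R^n and let W_1 and W_2 be subspaces (the perturbed versions of J inside two estimated row spaces) such that the largest principal angle between J and W_k is θ_k for k = 1,2. Then the largest principal angle φ between W_1 and W_2 satisfies sin φ ≤ sin(θ_1 + θ_2), provided θ_1 + θ_2 ≤ π/2. -/
set_option maxHeartbeats 1000000
open Matrix

open Matrix

section Aux

variable {n : ℕ}

local notation "E" => EuclideanSpace ℝ (Fin n)

/-- Plain (ambient-valued) orthogonal projection. -/
noncomputable def pr (U : Submodule ℝ (EuclideanSpace ℝ (Fin n)))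
    (x : EuclideanSpace ℝ (Fin n)) : EuclideanSpace ℝ (Fin n) :=
  (U.orthogonalProjectionOnto x : EuclideanSpace ℝ (Fin n))

lemma pr_mem (U : Submodule ℝ E) (x : E) : pr U x ∈ U := (U.orthogonalProjectionOnto x).2

lemma pr_eq_self (U : Submodule ℝ E) {x : E} (hx : x ∈ U) : pr U x = x :=
  (Submodule.starProjection_eq_self_iff (K := U)).2 hx

lemma inner_sub_pr (U : Submodule ℝ E) (x : E) {y : E} (hy : y ∈ U) :
    inner ℝ (x - pr U x) y = (0 : ℝ) :=
  Submodule.starProjection_inner_eq_zero (K := U) x y hy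

lemma pr_pyth (U : Submodule ℝ E) (x : E) :
    ‖x‖ ^ 2 = ‖pr U x‖ ^ 2 + ‖x - pr U x‖ ^ 2 := by
  have h : inner ℝ (pr U x) (x - pr U x) = (0 : ℝ) := by
    rw [real_inner_comm]; exact inner_sub_pr U x (pr_mem U x)
  have hx : x = pr U x + (x - pr U x) := by abel
  calc ‖x‖ ^ 2 = ‖pr U x + (x - pr U x)‖ ^ 2 := by rw [← hx]
    _ = ‖pr U x‖ ^ 2 + 2 * inner ℝ (pr U x) (x - pr U x) + ‖x - pr U x‖ ^ 2 :=
        norm_add_sq_real _ _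
    _ = ‖pr U x‖ ^ 2 + ‖x - pr U x‖ ^ 2 := by rw [h]; ring

lemma pr_norm_le (U : Submodule ℝ E) (x : E) : ‖pr U x‖ ≤ ‖x‖ := by
  have h := pr_pyth U x
  nlinarith [norm_nonneg (pr U x), norm_nonneg x, sq_nonneg ‖x - pr U x‖]

lemma sub_pr_norm_le (U : Submodule ℝ E) (x : E) : ‖x - pr U x‖ ≤ ‖x‖ := by
  have h := pr_pyth U x
  nlinarith [norm_nonneg (x - pr U x), norm_nonneg x, sq_nonneg ‖pr U x‖]

lemma toEuclideanLin_proj_mul_apply (U V : Submodule ℝ E) (x : E) :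
    Matrix.toEuclideanLin ((1 - projMat U) * projMat V) x = pr V x - pr U (pr V x) := by
  have hU : Matrix.toEuclideanLin (projMat U)
      = U.subtype ∘ₗ (U.orthogonalProjectionOnto).toLinearMap :=
    Matrix.toEuclideanLin.apply_symm_apply _
  have hV : Matrix.toEuclideanLin (projMat V)
      = V.subtype ∘ₗ (V.orthogonalProjectionOnto).toLinearMap :=
    Matrix.toEuclideanLin.apply_symm_apply _
  have hUV : Matrix.toEuclideanLin (projMat U * projMat V) x
      = Matrix.toEuclideanLin (projMat U) (Matrix.toEuclideanLin (projMat V) x) := by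
    simp [Matrix.toEuclideanLin_apply, Matrix.mulVec_mulVec]
  have hsub : (1 - projMat U) * projMat V = projMat V - projMat U * projMat V := by
    rw [Matrix.sub_mul, Matrix.one_mul]
  rw [hsub, map_sub, LinearMap.sub_apply, hUV, hU, hV]
  rfl

lemma opNorm_proj_mul_le (U V : Submodule ℝ E) (c : ℝ) (hc : 0 ≤ c)
    (h : ∀ x, ‖pr V x - pr U (pr V x)‖ ≤ c * ‖x‖) :
    opNorm ((1 - projMat U) * projMat V) ≤ c := by
  apply ContinuousLinearMap.opNorm_le_bound _ hc
  intro x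
  have := h x
  rw [LinearMap.coe_toContinuousLinearMap'] at *
  rwa [toEuclideanLin_proj_mul_apply]

lemma le_opNorm_proj_mul (U V : Submodule ℝ E) (x : E) :
    ‖pr V x - pr U (pr V x)‖ ≤ opNorm ((1 - projMat U) * projMat V) * ‖x‖ := by
  have := ((Matrix.toEuclideanLin
    ((1 - projMat U) * projMat V)).toContinuousLinearMap).le_opNorm x
  rw [LinearMap.coe_toContinuousLinearMap'] at this
  rwa [toEuclideanLin_proj_mul_apply] at this

end Aux

section Scalar

lemma sq_le_imp {a b : ℝ} (ha : 0 ≤ a) (hb : 0 ≤ b) (h : a ^ 2 ≤ b ^ 2) : a ≤ b :=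
  (pow_le_pow_iff_left₀ ha hb two_ne_zero).mp h

lemma scalarA {x s : ℝ} (h : x ≤ s * x) (hs : s < 1) (hx : 0 ≤ x) : x = 0 := by nlinarith

/-- From Pythagoras `v² = p² + d²` with `d ≤ s·v` conclude `c·v ≤ p`. -/
lemma scalarPyth {v p d s c : ℝ} (hp : v ^ 2 = p ^ 2 + d ^ 2) (hd : 0 ≤ d) (hv : 0 ≤ v)
    (h2 : d ≤ s * v) (hcs : c ^ 2 + s ^ 2 = 1) (hc : 0 ≤ c) (hpn : 0 ≤ p) : c * v ≤ p := by
  have hsv : 0 ≤ s * v := le_trans hd h2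
  have hd2 : d ^ 2 ≤ s ^ 2 * v ^ 2 := by nlinarith
  have : (c * v) ^ 2 ≤ p ^ 2 := by nlinarith
  exact sq_le_imp (mul_nonneg hc hv) hpn this

/-- Converse direction: from `w² = u² + d²` with `c·w ≤ u` conclude `d ≤ s·w`. -/
lemma scalarPyth' {w u d s c : ℝ} (hp : w ^ 2 = u ^ 2 + d ^ 2) (hcu : c * w ≤ u)
    (hc : 0 ≤ c) (hw : 0 ≤ w) (hd : 0 ≤ d) (hcs : c ^ 2 + s ^ 2 = 1) (hs : 0 ≤ s) :
    d ≤ s * w := by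
  have h1 : (c * w) ^ 2 ≤ u ^ 2 := pow_le_pow_left₀ (mul_nonneg hc hw) hcu 2
  have : d ^ 2 ≤ (s * w) ^ 2 := by nlinarith
  exact sq_le_imp hd (mul_nonneg hs hw) this

lemma scalarDiv {w pj v c : ℝ} (h1 : w ^ 2 ≤ pj * v) (h2 : c * v ≤ w) (hw : 0 < w)
    (hpj : 0 ≤ pj) (hv : 0 ≤ v) (hc : 0 ≤ c) : c * w ≤ pj := by nlinarith

lemma scalarT {q z u s d : ℝ} (hq : q ^ 2 = z ^ 2 - z ^ 4 / u ^ 2)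
    (hud : u ^ 2 = z ^ 2 + d ^ 2) (hd2 : d ≤ s * u) (hd0 : 0 ≤ d) (hu : 0 < u)
    (hq0 : 0 ≤ q) (hz : 0 ≤ z) (hs : 0 ≤ s) : q ≤ s * z := by
  have hu2 : (0 : ℝ) < u ^ 2 := by positivity
  have hsu : 0 ≤ s * u := le_trans hd0 hd2
  have hds : d ^ 2 ≤ s ^ 2 * u ^ 2 := by nlinarith
  have hmul : q ^ 2 * u ^ 2 = z ^ 2 * u ^ 2 - z ^ 4 := by
    rw [hq, sub_mul, div_mul_cancel₀ _ (ne_of_gt hu2)]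
  have : q ^ 2 ≤ (s * z) ^ 2 := by nlinarith
  exact sq_le_imp hq0 (mul_nonneg hs hz) this

lemma scalarI {I z s1 s2 w a b : ℝ} (habs : -(a * b) ≤ I)
    (hb : a * b ≤ s2 * w * (s1 * z)) : z ^ 2 - s1 * s2 * w * z ≤ z ^ 2 + I := by nlinarith

lemma scalarGE {z u w c1 c2 : ℝ} (h1 : c1 * u ≤ z) (h2 : c2 * w ≤ u) (hc1 : 0 ≤ c1) :
    c1 * c2 * w ≤ z := by nlinarith [mul_le_mul_of_nonneg_left h2 hc1]

lemma scalarFin {z I s1 s2 c1 c2 w : ℝ} (h : z ^ 2 - s1 * s2 * w * z ≤ I)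
    (hz : c1 * c2 * w ≤ z) (hz0 : 0 ≤ z) (hss : 0 ≤ s1 * s2 * w) :
    (c1 * c2 - s1 * s2) * w * z ≤ I := by nlinarith

lemma scalarProj {I P z X : ℝ} (hfin : X * z ≤ I) (hle : I ≤ P * z) (hz : 0 < z) :
    X ≤ P := by nlinarith

lemma scalarFinal {a b W X Y : ℝ} (hp : W ^ 2 = a ^ 2 + b ^ 2)
    (hsq : (X * W) ^ 2 ≤ a ^ 2) (h12 : X ^ 2 + Y ^ 2 = 1) (hb : 0 ≤ b)
    (hYW : 0 ≤ Y * W) : b ≤ Y * W := by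
  have : b ^ 2 ≤ (Y * W) ^ 2 := by nlinarith [sq_nonneg W]
  exact sq_le_imp hb hYW this

end Scalar

section Main

open RealInnerProductSpace

variable {n : ℕ}

local notation "E" => EuclideanSpace ℝ (Fin n)

/-- Swap lemma: if every vector of `J` is within (sine-)distance `s < 1` of `W` and
`finrank W = finrank J`, then every `w ∈ W` has a large projection onto `J`. -/
lemma swap_bound (J W : Submodule ℝ E)
    (hfr : Module.finrank ℝ W = Module.finrank ℝ J)
    (s c : ℝ) (hs1 : s < 1) (hc : 0 ≤ c) (hcs : c ^ 2 + s ^ 2 = 1)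
    (hs : ∀ v ∈ J, ‖v - pr W v‖ ≤ s * ‖v‖) :
    ∀ w ∈ W, c * ‖w‖ ≤ ‖pr J w‖ := by
  intro w hw
  rcases eq_or_ne w 0 with rfl | hw0
  · simp [pr]
  set T : J →ₗ[ℝ] W := (W.orthogonalProjectionOnto).toLinearMap ∘ₗ J.subtype with hT
  have hinj : Function.Injective T := by
    rw [← LinearMap.ker_eq_bot, LinearMap.ker_eq_bot']
    intro v hv
    have hprv : pr W (v : E) = 0 := by
      have : (T v : E) = 0 := by rw [hv]; rfl
      simpa [hT, pr] using this
    have h1 : ‖(v : E)‖ ≤ s * ‖(v : E)‖ := by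
      have := hs (v : E) v.2
      rwa [hprv, sub_zero] at this
    exact Subtype.ext (norm_eq_zero.mp (scalarA h1 hs1 (norm_nonneg _)))
  have hsurj : Function.Surjective T :=
    (LinearMap.injective_iff_surjective_of_finrank_eq_finrank hfr.symm).mp hinj
  obtain ⟨v, hv⟩ := hsurj ⟨w, hw⟩
  have hvW : pr W (v : E) = w := by
    have : (T v : E) = w := by rw [hv]
    simpa [hT, pr] using this
  -- ⟨w, v⟩ = ‖w‖²
  have hinner : ⟪w, (v : E)⟫ = ‖w‖ ^ 2 := by
    have h0 : ⟪(v : E) - pr W (v : E), w⟫ = 0 := inner_sub_pr W (v : E) hw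
    have he : ⟪(v : E), w⟫ = ⟪pr W (v : E), w⟫ + ⟪(v : E) - pr W (v : E), w⟫ := by
      rw [← inner_add_left]; congr 1; abel
    rw [real_inner_comm, he, h0, add_zero, hvW, real_inner_self_eq_norm_sq]
  -- c * ‖v‖ ≤ ‖w‖
  have hvbound : c * ‖(v : E)‖ ≤ ‖w‖ := by
    have hp := pr_pyth W (v : E)
    have h2 := hs (v : E) v.2
    rw [hvW] at hp h2
    exact scalarPyth hp (norm_nonneg _) (norm_nonneg _) h2 hcs hc (norm_nonneg _)
  -- ‖w‖² = ⟨pr J w, v⟩ ≤ ‖pr J w‖ ‖v‖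
  have hJw : ‖w‖ ^ 2 ≤ ‖pr J w‖ * ‖(v : E)‖ := by
    have h0 : ⟪w - pr J w, (v : E)⟫ = 0 := inner_sub_pr J w v.2
    have h1 : ⟪w, (v : E)⟫ = ⟪pr J w, (v : E)⟫ + ⟪w - pr J w, (v : E)⟫ := by
      rw [← inner_add_left]; congr 1; abel
    have h2 : ⟪pr J w, (v : E)⟫ ≤ ‖pr J w‖ * ‖(v : E)‖ := real_inner_le_norm _ _
    rw [← hinner, h1, h0, add_zero]; exact h2
  exact scalarDiv hJw hvbound (norm_pos_iff.mpr hw0) (norm_nonneg _) (norm_nonneg _) hc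

/-- Main pointwise bound. -/
lemma pointwise_bound (J W1 W2 : Submodule ℝ E)
    (s1 c1 s2 c2 : ℝ) (hs1 : 0 ≤ s1) (hs2 : 0 ≤ s2) (hc1 : 0 < c1) (hc2 : 0 < c2)
    (h1 : c1 ^ 2 + s1 ^ 2 = 1) (h2 : c2 ^ 2 + s2 ^ 2 = 1)
    (hcos : 0 ≤ c1 * c2 - s1 * s2)
    (hJ1 : ∀ v ∈ J, ‖v - pr W1 v‖ ≤ s1 * ‖v‖)
    (hW2 : ∀ w ∈ W2, c2 * ‖w‖ ≤ ‖pr J w‖) :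
    ∀ w ∈ W2, ‖w - pr W1 w‖ ≤ (s1 * c2 + c1 * s2) * ‖w‖ := by
  intro w hw
  rcases eq_or_ne w 0 with rfl | hw0
  · simp [pr]
  have hwpos : (0 : ℝ) < ‖w‖ := norm_pos_iff.mpr hw0
  obtain ⟨u, hu⟩ : ∃ u, u = pr J w := ⟨_, rfl⟩
  have huJ : u ∈ J := hu ▸ pr_mem J w
  have hu2 : c2 * ‖w‖ ≤ ‖u‖ := hu ▸ hW2 w hw
  have hupos : (0 : ℝ) < ‖u‖ := lt_of_lt_of_le (by positivity) hu2
  obtain ⟨z, hz⟩ : ∃ z, z = pr W1 u := ⟨_, rfl⟩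
  have hzW1 : z ∈ W1 := hz ▸ pr_mem W1 u
  have huz : ‖u - z‖ ≤ s1 * ‖u‖ := by rw [hz]; exact hJ1 u huJ
  have hpuz : ‖u‖ ^ 2 = ‖z‖ ^ 2 + ‖u - z‖ ^ 2 := by rw [hz]; exact pr_pyth W1 u
  have hzge : c1 * ‖u‖ ≤ ‖z‖ :=
    scalarPyth hpuz (norm_nonneg _) (norm_nonneg _) huz h1 hc1.le (norm_nonneg _)
  have hzpos : (0 : ℝ) < ‖z‖ := lt_of_lt_of_le (by positivity) hzge
  -- ⟨u, z⟩ = ‖z‖²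
  have huzin : ⟪u, z⟫ = ‖z‖ ^ 2 := by
    have h0 : ⟪u - z, z⟫ = 0 := by rw [hz]; exact inner_sub_pr W1 u (hz ▸ hzW1)
    have he : ⟪u, z⟫ = ⟪z, z⟫ + ⟪u - z, z⟫ := by
      rw [← inner_add_left]; congr 1; abel
    rw [he, h0, add_zero, real_inner_self_eq_norm_sq]
  -- ⟨w − u, u⟩ = 0
  have hwuu : ⟪w - u, u⟫ = 0 := by rw [hu]; exact inner_sub_pr J w (hu ▸ huJ)
  obtain ⟨t, ht⟩ : ∃ t : ℝ, t = ‖z‖ ^ 2 / ‖u‖ ^ 2 := ⟨_, rfl⟩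
  have hu2pos : (0 : ℝ) < ‖u‖ ^ 2 := by positivity
  have hztu : ‖z - t • u‖ ^ 2 = ‖z‖ ^ 2 - ‖z‖ ^ 4 / ‖u‖ ^ 2 := by
    have expand : ‖z - t • u‖ ^ 2 = ‖z‖ ^ 2 - 2 * (t * ⟪z, u⟫) + t ^ 2 * ‖u‖ ^ 2 := by
      rw [norm_sub_sq_real, real_inner_smul_right, norm_smul, Real.norm_eq_abs,
        mul_pow, sq_abs]
    rw [expand, real_inner_comm, huzin, ht]
    field_simp
    ring
  have hztu_le : ‖z - t • u‖ ≤ s1 * ‖z‖ :=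
    scalarT hztu hpuz huz (norm_nonneg _) hupos (norm_nonneg _) (norm_nonneg _) hs1
  -- ‖w − u‖ ≤ s2 ‖w‖
  have hwu_le : ‖w - u‖ ≤ s2 * ‖w‖ := by
    have hp : ‖w‖ ^ 2 = ‖u‖ ^ 2 + ‖w - u‖ ^ 2 := by rw [hu]; exact pr_pyth J w
    exact scalarPyth' hp hu2 hc2.le (norm_nonneg _) (norm_nonneg _) h2 hs2
  -- ⟨w, z⟩ ≥ ‖z‖² − s1 s2 ‖w‖ ‖z‖
  have hwz : ‖z‖ ^ 2 - s1 * s2 * ‖w‖ * ‖z‖ ≤ ⟪w, z⟫ := by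
    have hsplit : ⟪w, z⟫ = ‖z‖ ^ 2 + ⟪w - u, z - t • u⟫ := by
      have e1 : ⟪w, z⟫ = ⟪u, z⟫ + ⟪w - u, z⟫ := by
        rw [← inner_add_left]; congr 1; abel
      have e2 : ⟪w - u, z⟫ = ⟪w - u, z - t • u⟫ + t * ⟪w - u, u⟫ := by
        rw [← real_inner_smul_right, ← inner_add_right]; congr 1; abel
      rw [e1, e2, hwuu, huzin]; ring
    have hcs : |⟪w - u, z - t • u⟫| ≤ ‖w - u‖ * ‖z - t • u‖ :=
      abs_real_inner_le_norm _ _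
    have hb : ‖w - u‖ * ‖z - t • u‖ ≤ s2 * ‖w‖ * (s1 * ‖z‖) :=
      mul_le_mul hwu_le hztu_le (norm_nonneg _) (by positivity)
    rw [hsplit]
    exact scalarI (abs_le.mp hcs).1 hb
  -- conclude ‖pr W1 w‖ ≥ (c1 c2 − s1 s2) ‖w‖
  have hzGE : c1 * c2 * ‖w‖ ≤ ‖z‖ := scalarGE hzge hu2 hc1.le
  have hproj : (c1 * c2 - s1 * s2) * ‖w‖ ≤ ‖pr W1 w‖ := by
    have h0 : ⟪w - pr W1 w, z⟫ = 0 := inner_sub_pr W1 w hzW1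
    have e1 : ⟪w, z⟫ = ⟪pr W1 w, z⟫ + ⟪w - pr W1 w, z⟫ := by
      rw [← inner_add_left]; congr 1; abel
    have hle : ⟪w, z⟫ ≤ ‖pr W1 w‖ * ‖z‖ := by
      rw [e1, h0, add_zero]; exact real_inner_le_norm _ _
    have hss : 0 ≤ s1 * s2 * ‖w‖ := by positivity
    have hfin : (c1 * c2 - s1 * s2) * ‖w‖ * ‖z‖ ≤ ⟪w, z⟫ :=
      scalarFin hwz hzGE (norm_nonneg _) hss
    exact scalarProj hfin hle hzpos
  have h12 : (c1 * c2 - s1 * s2) ^ 2 + (s1 * c2 + c1 * s2) ^ 2 = 1 := by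
    have hr : (c1 * c2 - s1 * s2) ^ 2 + (s1 * c2 + c1 * s2) ^ 2
        = (c1 ^ 2 + s1 ^ 2) * (c2 ^ 2 + s2 ^ 2) := by ring
    rw [hr, h1, h2, mul_one]
  have hp : ‖w‖ ^ 2 = ‖pr W1 w‖ ^ 2 + ‖w - pr W1 w‖ ^ 2 := pr_pyth W1 w
  have hsq : ((c1 * c2 - s1 * s2) * ‖w‖) ^ 2 ≤ ‖pr W1 w‖ ^ 2 :=
    pow_le_pow_left₀ (mul_nonneg hcos (norm_nonneg w)) hproj 2
  have h12' : ((c1 * c2 - s1 * s2) * ‖w‖) ^ 2 + ((s1 * c2 + c1 * s2) * ‖w‖) ^ 2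
      = ‖w‖ ^ 2 := by
    have : ((c1 * c2 - s1 * s2) * ‖w‖) ^ 2 + ((s1 * c2 + c1 * s2) * ‖w‖) ^ 2
        = ((c1 * c2 - s1 * s2) ^ 2 + (s1 * c2 + c1 * s2) ^ 2) * ‖w‖ ^ 2 := by ring
    rw [this, h12, one_mul]
  have hpos : 0 ≤ (s1 * c2 + c1 * s2) * ‖w‖ := by positivity
  refine sq_le_imp (norm_nonneg _) hpos ?_
  linarith
end Main

/-- angle bound for a perturbed common subspace, two blocks.
If the largest principal angle between `J` and `W k` is `θ k` (`k = 1, 2`), so that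
`sin (θ k) = ‖(I − P_{W k}) P_J‖`, and `θ₁ + θ₂ ≤ π/2`, then the largest principal angle
`φ` between `W₁` and `W₂` satisfies `sin φ = ‖(I − P_{W₁}) P_{W₂}‖ ≤ sin (θ₁ + θ₂)`. -/
theorem perturbed_joint_angle_bound (n : ℕ)
    (J W1 W2 : Submodule ℝ (EuclideanSpace ℝ (Fin n)))
    (hd1 : Module.finrank ℝ W1 = Module.finrank ℝ J)
    (hd2 : Module.finrank ℝ W2 = Module.finrank ℝ J)
    (θ1 θ2 : ℝ) (hθ1nonneg : 0 ≤ θ1) (hθ2nonneg : 0 ≤ θ2)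
    (hθ1 : Real.sin θ1 = opNorm ((1 - projMat W1) * projMat J))
    (hθ2 : Real.sin θ2 = opNorm ((1 - projMat W2) * projMat J))
    (hsum : θ1 + θ2 ≤ Real.pi / 2) :
    opNorm ((1 - projMat W1) * projMat W2) ≤ Real.sin (θ1 + θ2) := by
  have hpi := Real.pi_pos
  have hsin12 : 0 ≤ Real.sin (θ1 + θ2) :=
    Real.sin_nonneg_of_nonneg_of_le_pi (by linarith) (by linarith)
  rcases lt_or_eq_of_le hsum with hlt | heq
  · -- strict case
    set s1 := Real.sin θ1 with hs1def
    set c1 := Real.cos θ1 with hc1def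
    set s2 := Real.sin θ2 with hs2def
    set c2 := Real.cos θ2 with hc2def
    have hs1nn : 0 ≤ s1 := Real.sin_nonneg_of_nonneg_of_le_pi hθ1nonneg (by linarith)
    have hs2nn : 0 ≤ s2 := Real.sin_nonneg_of_nonneg_of_le_pi hθ2nonneg (by linarith)
    have hc1pos : 0 < c1 := Real.cos_pos_of_mem_Ioo ⟨by linarith, by linarith⟩
    have hc2pos : 0 < c2 := Real.cos_pos_of_mem_Ioo ⟨by linarith, by linarith⟩
    have h1 : c1 ^ 2 + s1 ^ 2 = 1 := by
      rw [hc1def, hs1def, add_comm]; exact Real.sin_sq_add_cos_sq θ1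
    have h2 : c2 ^ 2 + s2 ^ 2 = 1 := by
      rw [hc2def, hs2def, add_comm]; exact Real.sin_sq_add_cos_sq θ2
    have hs2lt : s2 < 1 := by nlinarith
    have hcos : 0 ≤ c1 * c2 - s1 * s2 := by
      have := Real.cos_nonneg_of_mem_Icc (x := θ1 + θ2) ⟨by linarith, hsum⟩
      rwa [Real.cos_add] at this
    have hJ1' : ∀ v ∈ J, ‖v - pr W1 v‖ ≤ s1 * ‖v‖ := by
      intro v hv
      have h := le_opNorm_proj_mul W1 J v
      rwa [pr_eq_self J hv, ← hθ1] at h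
    have hJ2' : ∀ v ∈ J, ‖v - pr W2 v‖ ≤ s2 * ‖v‖ := by
      intro v hv
      have h := le_opNorm_proj_mul W2 J v
      rwa [pr_eq_self J hv, ← hθ2] at h
    have hW2 : ∀ w ∈ W2, c2 * ‖w‖ ≤ ‖pr J w‖ :=
      swap_bound J W2 hd2 s2 c2 hs2lt hc2pos.le h2 hJ2'
    have key := pointwise_bound J W1 W2 s1 c1 s2 c2 hs1nn hs2nn hc1pos hc2pos
      h1 h2 hcos hJ1' hW2
    apply opNorm_proj_mul_le W1 W2 _ hsin12
    intro x
    have h3 := key (pr W2 x) (pr_mem W2 x)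
    have h4 : (s1 * c2 + c1 * s2) * ‖pr W2 x‖ ≤ (s1 * c2 + c1 * s2) * ‖x‖ :=
      mul_le_mul_of_nonneg_left (pr_norm_le W2 x) (by positivity)
    rw [Real.sin_add, ← hs1def, ← hc1def, ← hs2def, ← hc2def]
    exact le_trans h3 h4
  · -- boundary case: sin (θ1 + θ2) = 1
    rw [heq, Real.sin_pi_div_two]
    apply opNorm_proj_mul_le W1 W2 _ zero_le_one
    intro x
    rw [one_mul]
    exact le_trans (sub_pr_norm_le W1 (pr W2 x)) (pr_norm_le W2 x)
end
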